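/- Let A be an associative unital ℂ-algebra, V a finite-dimensional ℂ-vector space, and ρ: A → End_ℂ(V) a ℂ-algebra homomorphism. Then the assignment f ↦ (e ↦ tr_V(e∘f)) induces a well-defined ℂ-linear isomorphism from the quotient space End_ℂ(V)/[ρ(A), End(V)] onto the dual vector space (End_A(V))*, where End_A(V) ⊆ End_ℂ(V) is the subspace of endomorphisms commuting with the action of A. -/
import Mathlib


variable {A : Type*} [Ring A] [Algebra ℂ A]
variable {V : Type*} [AddCommGroup V] [Module ℂ V]

/-- The commutant `End_A(V)` of a representation `ρ : A → End_ℂ(V)`: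
the subspace of ℂ-linear endomorphisms commuting with the action of `A`. -/
def commutant (ρ : A →ₐ[ℂ] Module.End ℂ V) : Submodule ℂ (Module.End ℂ V) where
  carrier := {g | ∀ a : A, ρ a * g = g * ρ a}
  add_mem' := by
    intro f g hf hg a
    simp only [mul_add, add_mul, hf a, hg a]
  zero_mem' := by intro a; simp
  smul_mem' := by
    intro c f hf a
    simp only [Algebra.mul_smul_comm, Algebra.smul_mul_assoc, hf a]

open LinearMap FiniteDimensional Module

/-- The trace pairing `f ↦ (g ↦ tr(g * f))` as a linear map into the dual. -/
noncomputable def tracePairing [FiniteDimensional ℂ V] :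
    Module.End ℂ V →ₗ[ℂ] Module.Dual ℂ (Module.End ℂ V) where
  toFun f := (LinearMap.trace ℂ V) ∘ₗ (LinearMap.mulRight ℂ f)
  map_add' f g := by
    ext h
    simp [LinearMap.mulRight_apply, mul_add]
  map_smul' c f := by
    ext h
    simp [LinearMap.mulRight_apply, mul_smul_comm]

lemma tracePairing_apply [FiniteDimensional ℂ V] (f g : Module.End ℂ V) :
    tracePairing f g = LinearMap.trace ℂ V (g * f) := rfl

lemma tracePairing_injective [FiniteDimensional ℂ V] :
    Function.Injective (tracePairing (V := V)) := by
  rw [injective_iff_map_eq_zero]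
  intro f hf
  ext v
  rw [LinearMap.zero_apply, ← Module.forall_dual_apply_eq_zero_iff ℂ]
  intro φ
  have h1 : tracePairing f (dualTensorHom ℂ V V (φ ⊗ₜ v)) = 0 := by rw [hf]; rfl
  have h2 : dualTensorHom ℂ V V (φ ⊗ₜ v) * f = dualTensorHom ℂ V V ((φ ∘ₗ f) ⊗ₜ v) := by
    ext x
    simp [Module.End.mul_apply]
  rw [tracePairing_apply, h2, trace_eq_contract_apply, contractLeft_apply] at h1
  simpa using h1

theorem stmt2 [FiniteDimensional ℂ V] (ρ : A →ₐ[ℂ] Module.End ℂ V) :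
    ∃ Φ : (Module.End ℂ V ⧸ Submodule.span ℂ
            {f : Module.End ℂ V | ∃ (a : A) (g : Module.End ℂ V), f = ρ a * g - g * ρ a})
          ≃ₗ[ℂ] Module.Dual ℂ (commutant ρ),
      ∀ (f : Module.End ℂ V) (g : commutant ρ),
        Φ (Submodule.Quotient.mk f) g = LinearMap.trace ℂ V ((g : Module.End ℂ V) * f) := by
  classical
  set I : Submodule ℂ (Module.End ℂ V) :=
    Submodule.span ℂ {f : Module.End ℂ V | ∃ (a : A) (g : Module.End ℂ V),
      f = ρ a * g - g * ρ a} with hI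
  set C : Submodule ℂ (Module.End ℂ V) := commutant ρ with hCdef
  set T := tracePairing (V := V) with hT
  have Tinj : Function.Injective T := tracePairing_injective
  have Tsurj : Function.Surjective T := by
    refine (LinearMap.injective_iff_surjective_of_finrank_eq_finrank ?_).mp Tinj
    exact (Subspace.dual_finrank_eq (K := ℂ) (V := Module.End ℂ V)).symm
  -- trace of a commutator against a commuting element vanishes
  have hgen : ∀ (a : A) (h g : Module.End ℂ V), g ∈ C →
      LinearMap.trace ℂ V (g * (ρ a * h - h * ρ a)) = 0 := by
    intro a h g hg
    have hc : ρ a * g = g * ρ a := hg a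
    have e1 : g * (ρ a * h) = ρ a * (g * h) := by
      rw [← mul_assoc, ← hc, mul_assoc]
    have e2 : g * (h * ρ a) = (g * h) * ρ a := by rw [mul_assoc]
    rw [mul_sub, e1, e2, map_sub, LinearMap.trace_mul_comm, sub_self]
  have hI0 : ∀ f ∈ I, ∀ g ∈ C, LinearMap.trace ℂ V (g * f) = 0 := by
    intro f hf g hg
    induction hf using Submodule.span_induction with
    | mem x hx => obtain ⟨a, h, rfl⟩ := hx; exact hgen a h g hg
    | zero => simp
    | add x y hx hy ihx ihy => rw [mul_add, map_add, ihx, ihy, add_zero]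
    | smul c x hx ihx => rw [mul_smul_comm, map_smul, ihx, smul_zero]
  -- the commutant is the preimage of the annihilator of I
  have hCcomap : C = Submodule.comap T I.dualAnnihilator := by
    apply le_antisymm
    · intro g hg
      rw [Submodule.mem_comap, Submodule.mem_dualAnnihilator]
      intro f hf
      rw [tracePairing_apply, LinearMap.trace_mul_comm]
      exact hI0 f hf g hg
    · intro g hg
      intro a
      have key : ∀ h : Module.End ℂ V, T (g * ρ a - ρ a * g) h = 0 := by
        intro h
        have hmem : ρ a * h - h * ρ a ∈ I := Submodule.subset_span ⟨a, h, rfl⟩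
        have h0 : T g (ρ a * h - h * ρ a) = 0 := by
          rw [Submodule.mem_comap, Submodule.mem_dualAnnihilator] at hg
          exact hg _ hmem
        rw [tracePairing_apply, sub_mul, map_sub] at h0
        have c1 : LinearMap.trace ℂ V ((ρ a * h) * g) =
            LinearMap.trace ℂ V (h * (g * ρ a)) := by
          rw [mul_assoc, LinearMap.trace_mul_comm, mul_assoc]
        have c2 : LinearMap.trace ℂ V ((h * ρ a) * g) =
            LinearMap.trace ℂ V (h * (ρ a * g)) := by rw [mul_assoc]
        rw [c1, c2] at h0
        rw [tracePairing_apply, mul_sub, map_sub] at *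
        exact h0
      have hz : T (g * ρ a - ρ a * g) = 0 := LinearMap.ext key
      have := Tinj (by rw [hz, map_zero] : T (g * ρ a - ρ a * g) = T 0)
      have := sub_eq_zero.mp this
      exact this.symm
  have hmapC : Submodule.map T C = I.dualAnnihilator := by
    rw [hCcomap, Submodule.map_comap_eq_of_surjective Tsurj]
  -- dimension counts
  have hann : ∀ W : Submodule ℂ (Module.End ℂ V),
      finrank ℂ W.dualAnnihilator + finrank ℂ W = finrank ℂ (Module.End ℂ V) := by
    intro W
    rw [← LinearEquiv.finrank_eq (Subspace.quotEquivAnnihilator W)]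
    exact Submodule.finrank_quotient_add_finrank W
  have eC : finrank ℂ C = finrank ℂ I.dualAnnihilator := by
    rw [← hmapC]
    exact LinearEquiv.finrank_eq (Submodule.equivMapOfInjective T Tinj C)
  have eI : finrank ℂ (Submodule.map T I) = finrank ℂ C.dualAnnihilator := by
    have h1 := hann I
    have h2 := hann C
    have h3 : finrank ℂ (Submodule.map T I) = finrank ℂ I :=
      (LinearEquiv.finrank_eq (Submodule.equivMapOfInjective T Tinj I)).symm
    omega
  have hle : Submodule.map T I ≤ C.dualAnnihilator := by
    rintro φ ⟨f, hf, rfl⟩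
    rw [Submodule.mem_dualAnnihilator]
    intro g hg
    rw [tracePairing_apply]
    exact hI0 f hf g hg
  have hmapI : Submodule.map T I = C.dualAnnihilator :=
    Submodule.eq_of_le_of_finrank_eq hle eI
  -- the pairing with the commutant
  set B : Module.End ℂ V →ₗ[ℂ] Module.Dual ℂ C := (C.subtype.dualMap) ∘ₗ T with hB
  have hBsurj : Function.Surjective B :=
    (LinearMap.dualMap_surjective_of_injective C.injective_subtype).comp Tsurj
  have hkerB : LinearMap.ker B = I := by
    ext f
    rw [LinearMap.mem_ker]
    constructor
    · intro h0
      have hTf : T f ∈ C.dualAnnihilator := by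
        rw [Submodule.mem_dualAnnihilator]
        intro g hg
        exact LinearMap.congr_fun h0 ⟨g, hg⟩
      rw [← hmapI] at hTf
      obtain ⟨f', hf', hff'⟩ := hTf
      rwa [← Tinj hff']
    · intro hfI
      ext g
      exact hI0 f hfI g.1 g.2
  have hle' : I ≤ LinearMap.ker B := le_of_eq hkerB.symm
  have hlift_inj : Function.Injective (I.liftQ B hle') := by
    rw [← LinearMap.ker_eq_bot]
    rw [Submodule.ker_liftQ_eq_bot]
    exact le_of_eq hkerB
  have hlift_surj : Function.Surjective (I.liftQ B hle') := by
    rw [← LinearMap.range_eq_top, Submodule.range_liftQ, LinearMap.range_eq_top]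
    exact hBsurj
  refine ⟨LinearEquiv.ofBijective (I.liftQ B hle') ⟨hlift_inj, hlift_surj⟩, ?_⟩
  intro f g
  show (I.liftQ B hle') (Submodule.Quotient.mk f) g = _
  rw [Submodule.liftQ_apply]
  rfl
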